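/- Let V₁ and V₂ be commuting isometries on a complex Hilbert space H, V := V₁V₂, and C := I − V₁V₁* − V₂V₂* + VV*. Then the eigenspace of C at eigenvalue 1 is {h ∈ H : Ch = h} = ker V₁* ∩ ker V₂*, and the eigenspace of C at eigenvalue −1 is {h ∈ H : Ch = −h} = ran V₁ ∩ ran V₂ ∩ (ran V)ᗮ. -/

import Mathlib

open ContinuousLinearMap
open scoped InnerProductSpace

section Aux
variable {H : Type*} [NormedAddCommGroup H] [InnerProductSpace ℂ H] [CompleteSpace H]

lemma aux_adj_apply (V : H →L[ℂ] H) (hV : adjoint V ∘L V = 1) (x : H) :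
    adjoint V (V x) = x := by
  have := congrArg (fun T : H →L[ℂ] H => T x) hV
  simpa using this

lemma aux_isom_norm (V : H →L[ℂ] H) (hV : adjoint V ∘L V = 1) (x : H) : ‖V x‖ = ‖x‖ := by
  have h2 : (⟪V x, V x⟫_ℂ) = ⟪x, x⟫_ℂ := by
    rw [← adjoint_inner_left V x (V x), aux_adj_apply V hV]
  have h3 : ((‖V x‖ : ℂ)) ^ 2 = ((‖x‖ : ℂ)) ^ 2 := by
    rwa [inner_self_eq_norm_sq_to_K, inner_self_eq_norm_sq_to_K] at h2
  have h4 : ‖V x‖ ^ 2 = ‖x‖ ^ 2 := by exact_mod_cast h3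
  nlinarith [norm_nonneg (V x), norm_nonneg x]

lemma aux_adj_contract (V : H →L[ℂ] H) (hV : adjoint V ∘L V = 1) (x : H) :
    ‖adjoint V x‖ ≤ ‖x‖ := by
  have h1 : (⟪adjoint V x, adjoint V x⟫_ℂ) = ⟪x, V (adjoint V x)⟫_ℂ :=
    adjoint_inner_left V (adjoint V x) x
  have h2 : ‖adjoint V x‖ ^ 2 = RCLike.re ⟪x, V (adjoint V x)⟫_ℂ := by
    rw [← h1]; exact (inner_self_eq_norm_sq _).symm
  have h3 : RCLike.re ⟪x, V (adjoint V x)⟫_ℂ ≤ ‖x‖ * ‖V (adjoint V x)‖ :=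
    re_inner_le_norm _ _
  rw [aux_isom_norm V hV] at h3
  nlinarith [norm_nonneg (adjoint V x), norm_nonneg x]

-- ⟪h, V y⟫ = ⟪adjoint V h, y⟫
lemma aux_inner_shift (V : H →L[ℂ] H) (h y : H) :
    (⟪h, V y⟫_ℂ) = ⟪adjoint V h, y⟫_ℂ := (adjoint_inner_left V y h).symm

end Aux

/-- Let `V₁, V₂` be commuting isometries on a complex Hilbert space,
`V := V₁V₂`, and `C := I − V₁V₁* − V₂V₂* + VV*`. Then the eigenspace of `C` at `1` is
`ker V₁* ∩ ker V₂*`, and the eigenspace of `C` at `−1` is `ran V₁ ∩ ran V₂ ∩ (ran V)ᗮ`. -/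
theorem stmt12 {H : Type*} [NormedAddCommGroup H] [InnerProductSpace ℂ H] [CompleteSpace H]
    (V₁ V₂ : H →L[ℂ] H)
    (hV₁ : adjoint V₁ ∘L V₁ = 1) (hV₂ : adjoint V₂ ∘L V₂ = 1)
    (hcomm : V₁ ∘L V₂ = V₂ ∘L V₁)
    (C : H →L[ℂ] H)
    (hC : C = 1 - V₁ ∘L adjoint V₁ - V₂ ∘L adjoint V₂
        + (V₁ ∘L V₂) ∘L adjoint (V₁ ∘L V₂)) :
    ({h : H | C h = h} =
        ↑(LinearMap.ker (adjoint V₁ : H →ₗ[ℂ] H) ⊓ LinearMap.ker (adjoint V₂ : H →ₗ[ℂ] H))) ∧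
    ({h : H | C h = -h} =
        ↑(LinearMap.range (V₁ : H →ₗ[ℂ] H) ⊓ LinearMap.range (V₂ : H →ₗ[ℂ] H) ⊓
          (LinearMap.range ((V₁ ∘L V₂ : H →L[ℂ] H) : H →ₗ[ℂ] H))ᗮ : Submodule ℂ H)) := by
  set A₁ := adjoint V₁ with hA₁
  set A₂ := adjoint V₂ with hA₂
  have hadj : adjoint (V₁ ∘L V₂) = A₂ ∘L A₁ := adjoint_comp V₁ V₂
  have hacomm : A₂ ∘L A₁ = A₁ ∘L A₂ := by
    rw [← adjoint_comp V₁ V₂, hcomm, adjoint_comp]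
  have hCh : ∀ h : H, C h = h - V₁ (A₁ h) - V₂ (A₂ h) + V₁ (V₂ (A₂ (A₁ h))) := by
    intro h
    simp [hC, hadj, sub_apply, add_apply, comp_apply, one_apply]
  have i1 : ∀ h : H, (⟪h, V₁ (A₁ h)⟫_ℂ) = ((‖A₁ h‖ : ℂ)) ^ 2 := fun h => by
    rw [aux_inner_shift, ← hA₁, inner_self_eq_norm_sq_to_K]; norm_cast
  have i2 : ∀ h : H, (⟪h, V₂ (A₂ h)⟫_ℂ) = ((‖A₂ h‖ : ℂ)) ^ 2 := fun h => by
    rw [aux_inner_shift, ← hA₂, inner_self_eq_norm_sq_to_K]; norm_cast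
  have i3 : ∀ h : H, (⟪h, V₁ (V₂ (A₂ (A₁ h)))⟫_ℂ) = ((‖A₂ (A₁ h)‖ : ℂ)) ^ 2 := fun h => by
    rw [aux_inner_shift, ← hA₁, aux_inner_shift, ← hA₂, inner_self_eq_norm_sq_to_K]; norm_cast
  have hwle1 : ∀ h : H, ‖A₂ (A₁ h)‖ ≤ ‖A₁ h‖ := fun h => aux_adj_contract V₂ hV₂ _
  have hweq : ∀ h : H, A₂ (A₁ h) = A₁ (A₂ h) := fun h =>
    congrArg (fun T : H →L[ℂ] H => T h) hacomm
  have hwle2 : ∀ h : H, ‖A₂ (A₁ h)‖ ≤ ‖A₂ h‖ := fun h => by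
    rw [hweq]; exact aux_adj_contract V₁ hV₁ _
  have hc1 : ∀ h : H, ‖A₁ h‖ ≤ ‖h‖ := fun h => aux_adj_contract V₁ hV₁ h
  have hc2 : ∀ h : H, ‖A₂ h‖ ≤ ‖h‖ := fun h => aux_adj_contract V₂ hV₂ h
  constructor
  · ext h
    simp only [Set.mem_setOf_eq, SetLike.mem_coe, Submodule.mem_inf, LinearMap.mem_ker]
    constructor
    · intro hc
      rw [hCh h] at hc
      have e3 : ((‖h‖ : ℂ)) ^ 2 - ((‖A₁ h‖ : ℂ)) ^ 2 - ((‖A₂ h‖ : ℂ)) ^ 2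
          + ((‖A₂ (A₁ h)‖ : ℂ)) ^ 2 = ((‖h‖ : ℂ)) ^ 2 := by
        have := congrArg (fun z => (⟪h, z⟫_ℂ)) hc
        simpa [inner_sub_right, inner_add_right, i1 h, i2 h, i3 h,
          inner_self_eq_norm_sq_to_K] using this
      have e4 : ‖h‖ ^ 2 - ‖A₁ h‖ ^ 2 - ‖A₂ h‖ ^ 2 + ‖A₂ (A₁ h)‖ ^ 2 = ‖h‖ ^ 2 := by
        exact_mod_cast e3
      have s1 : ‖A₂ (A₁ h)‖ ^ 2 ≤ ‖A₁ h‖ ^ 2 := pow_le_pow_left₀ (norm_nonneg _) (hwle1 h) 2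
      have s2 : ‖A₂ (A₁ h)‖ ^ 2 ≤ ‖A₂ h‖ ^ 2 := pow_le_pow_left₀ (norm_nonneg _) (hwle2 h) 2
      have z1 : ‖A₁ h‖ ^ 2 = 0 := by linarith [sq_nonneg (‖A₁ h‖), sq_nonneg (‖A₂ h‖)]
      have z2 : ‖A₂ h‖ ^ 2 = 0 := by linarith [sq_nonneg (‖A₁ h‖), sq_nonneg (‖A₂ h‖)]
      exact ⟨norm_eq_zero.mp ((pow_eq_zero_iff two_ne_zero).mp z1),
        norm_eq_zero.mp ((pow_eq_zero_iff two_ne_zero).mp z2)⟩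
    · rintro ⟨h1, h2⟩
      rw [hCh h, show A₁ h = 0 from h1, show A₂ h = 0 from h2]
      simp
  · ext h
    simp only [Set.mem_setOf_eq, SetLike.mem_coe, Submodule.mem_inf]
    constructor
    · intro hc
      rw [hCh h] at hc
      have e3 : ((‖h‖ : ℂ)) ^ 2 - ((‖A₁ h‖ : ℂ)) ^ 2 - ((‖A₂ h‖ : ℂ)) ^ 2
          + ((‖A₂ (A₁ h)‖ : ℂ)) ^ 2 = -((‖h‖ : ℂ)) ^ 2 := by
        have := congrArg (fun z => (⟪h, z⟫_ℂ)) hc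
        simpa [inner_sub_right, inner_add_right, inner_neg_right, i1 h, i2 h, i3 h,
          inner_self_eq_norm_sq_to_K] using this
      have e4 : ‖h‖ ^ 2 - ‖A₁ h‖ ^ 2 - ‖A₂ h‖ ^ 2 + ‖A₂ (A₁ h)‖ ^ 2 = -(‖h‖ ^ 2) := by
        exact_mod_cast e3
      have s1 : ‖A₁ h‖ ^ 2 ≤ ‖h‖ ^ 2 := pow_le_pow_left₀ (norm_nonneg _) (hc1 h) 2
      have s2 : ‖A₂ h‖ ^ 2 ≤ ‖h‖ ^ 2 := pow_le_pow_left₀ (norm_nonneg _) (hc2 h) 2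
      have z1 : ‖A₁ h‖ ^ 2 = ‖h‖ ^ 2 := by linarith [sq_nonneg (‖A₂ (A₁ h)‖)]
      have z2 : ‖A₂ h‖ ^ 2 = ‖h‖ ^ 2 := by linarith [sq_nonneg (‖A₂ (A₁ h)‖)]
      have zw : A₂ (A₁ h) = 0 := by
        have hz : ‖A₂ (A₁ h)‖ ^ 2 = 0 := by linarith
        exact norm_eq_zero.mp ((pow_eq_zero_iff two_ne_zero).mp hz)
      have r1 : h = V₁ (A₁ h) := by
        have hn : ‖h - V₁ (A₁ h)‖ ^ 2 = 0 := by
          rw [@norm_sub_sq ℂ]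
          have hre : RCLike.re (⟪h, V₁ (A₁ h)⟫_ℂ) = ‖A₁ h‖ ^ 2 := by
            rw [i1 h]; norm_cast
          rw [hre, aux_isom_norm V₁ hV₁]
          linarith
        have := (pow_eq_zero_iff two_ne_zero).mp hn
        exact sub_eq_zero.mp (norm_eq_zero.mp this)
      have r2 : h = V₂ (A₂ h) := by
        have hn : ‖h - V₂ (A₂ h)‖ ^ 2 = 0 := by
          rw [@norm_sub_sq ℂ]
          have hre : RCLike.re (⟪h, V₂ (A₂ h)⟫_ℂ) = ‖A₂ h‖ ^ 2 := by
            rw [i2 h]; norm_cast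
          rw [hre, aux_isom_norm V₂ hV₂]
          linarith
        have := (pow_eq_zero_iff two_ne_zero).mp hn
        exact sub_eq_zero.mp (norm_eq_zero.mp this)
      refine ⟨⟨⟨A₁ h, r1.symm⟩, ⟨A₂ h, r2.symm⟩⟩, ?_⟩
      rw [Submodule.mem_orthogonal]
      rintro u ⟨x, rfl⟩
      have : (⟪(V₁ ∘L V₂) x, h⟫_ℂ) = ⟪x, adjoint (V₁ ∘L V₂) h⟫_ℂ :=
        (adjoint_inner_right _ x h).symm
      rw [ContinuousLinearMap.coe_coe, this, hadj]
      simp [comp_apply, zw]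
    · rintro ⟨⟨⟨x, hx⟩, ⟨y, hy⟩⟩, horth⟩
      have hw : adjoint (V₁ ∘L V₂) h = 0 := by
        have h0 : (⟪(V₁ ∘L V₂) (adjoint (V₁ ∘L V₂) h), h⟫_ℂ) = 0 :=
          (Submodule.mem_orthogonal _ h).mp horth _ ⟨_, rfl⟩
        rw [← adjoint_inner_right (V₁ ∘L V₂) (adjoint (V₁ ∘L V₂) h) h] at h0
        exact inner_self_eq_zero.mp h0
      have hw' : A₂ (A₁ h) = 0 := by
        have := hw
        rw [hadj] at this
        simpa [comp_apply] using this
      have p1 : V₁ (A₁ h) = h := by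
        rw [← hx, hA₁, ContinuousLinearMap.coe_coe, aux_adj_apply V₁ hV₁]
      have p2 : V₂ (A₂ h) = h := by
        rw [← hy, hA₂, ContinuousLinearMap.coe_coe, aux_adj_apply V₂ hV₂]
      rw [hCh h, p1, p2, hw']
      simp
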